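/- Let f(z) = Σ_{k≥0} ξ_k e^{−αk²} z^k where ξ_k ∈ {−1, +1} is an arbitrary sequence of signs and α ≥ log 3. Then all zeros of f are real. -/

import Mathlib

open Complex

namespace Stmt11Aux
open Finset Filter


lemma one_le_pow' {x : ℝ} (hx : 1 ≤ x) (n : ℕ) : 1 ≤ x ^ n := by
  calc (1:ℝ) = 1 ^ n := (one_pow n).symm
  _ ≤ x ^ n := pow_le_pow_left₀ zero_le_one hx n

lemma pow_third {q : ℝ} (hq0 : 0 ≤ q) (hq : q ≤ 1/3) {e E : ℕ} (h : e ≤ E) :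
    q ^ E ≤ (1/3:ℝ) ^ e :=
  (pow_le_pow_left₀ hq0 hq E).trans (pow_le_pow_of_le_one (by norm_num) (by norm_num) h)

lemma norm_tsum_le_geom {g : ℕ → ℂ} {A x : ℝ} (hx0 : 0 ≤ x) (hx1 : x < 1)
    (h : ∀ n, ‖g n‖ ≤ A * x ^ n) : ‖∑' n, g n‖ ≤ A / (1 - x) := by
  have hgeo : Summable (fun n : ℕ => A * x ^ n) :=
    (summable_geometric_of_lt_one hx0 hx1).mul_left A
  have hg : Summable (fun n => ‖g n‖) :=
    Summable.of_nonneg_of_le (fun n => norm_nonneg _) h hgeo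
  calc ‖∑' n, g n‖ ≤ ∑' n, ‖g n‖ := norm_tsum_le_tsum_norm hg
    _ ≤ ∑' n, A * x ^ n := Summable.tsum_le_tsum h hg hgeo
    _ = A * (1 - x)⁻¹ := by rw [tsum_mul_left, tsum_geometric_of_lt_one hx0 hx1]
    _ = A / (1 - x) := (div_eq_mul_inv _ _).symm

lemma norm_sum_le_geom {g : ℕ → ℂ} {p : ℕ} {A x : ℝ} (hA : 0 ≤ A) (hx0 : 0 ≤ x) (hx1 : x < 1)
    (h : ∀ i, i < p → ‖g (p - 1 - i)‖ ≤ A * x ^ i) :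
    ‖∑ k ∈ range p, g k‖ ≤ A / (1 - x) := by
  have h1 : ‖∑ k ∈ range p, g k‖ ≤ ∑ k ∈ range p, ‖g k‖ := norm_sum_le _ _
  rw [← Finset.sum_range_reflect (fun k => ‖g k‖) p] at h1
  have h2 : ∑ i ∈ range p, ‖g (p - 1 - i)‖ ≤ ∑ i ∈ range p, A * x ^ i :=
    Finset.sum_le_sum (fun i hi => h i (Finset.mem_range.mp hi))
  have h3 : ∑ i ∈ range p, A * x ^ i ≤ A / (1 - x) := by
    calc ∑ i ∈ range p, A * x ^ i ≤ ∑' i : ℕ, A * x ^ i :=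
          Summable.sum_le_tsum _ (fun i _ => by positivity)
            ((summable_geometric_of_lt_one hx0 hx1).mul_left A)
      _ = A / (1-x) := by rw [tsum_mul_left, tsum_geometric_of_lt_one hx0 hx1, div_eq_mul_inv]
  linarith

lemma split2 {g : ℕ → ℂ} (hg : Summable g) (p : ℕ) :
    ∑' k, g k = (∑ k ∈ range p, g k) + g p + g (p+1) + ∑' n, g (n+(p+2)) := by
  have h := Summable.sum_add_tsum_nat_add (p+2) hg
  rw [← h, Finset.sum_range_succ, Finset.sum_range_succ]

lemma norm_pow_sub_pow (z w : ℂ) (h : ‖w‖ = ‖z‖) (j : ℕ) :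
    ‖z^(j+1) - w^(j+1)‖ ≤ ((j:ℝ)+1) * ‖z‖^j * ‖z-w‖ := by
  rw [← geom_sum₂_mul z w (j+1), norm_mul]
  have h1 : ‖∑ i ∈ range (j+1), z ^ i * w ^ (j+1-1-i)‖ ≤ ((j:ℝ)+1) * ‖z‖^j := by
    calc ‖∑ i ∈ range (j+1), z ^ i * w ^ (j+1-1-i)‖
        ≤ ∑ i ∈ range (j+1), ‖z ^ i * w ^ (j+1-1-i)‖ := norm_sum_le _ _
      _ = ∑ i ∈ range (j+1), ‖z‖^j := by
          apply Finset.sum_congr rfl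
          intro i hi
          have hij : i ≤ j := by simpa [Nat.lt_succ_iff] using Finset.mem_range.mp hi
          rw [norm_mul, norm_pow, norm_pow, h, ← pow_add]
          congr 1
          omega
      _ = ((j:ℝ)+1) * ‖z‖^j := by
          rw [Finset.sum_const, Finset.card_range]
          push_cast
          ring
  calc ‖∑ i ∈ range (j+1), z ^ i * w ^ (j+1-1-i)‖ * ‖z - w‖
      ≤ (((j:ℝ)+1) * ‖z‖^j) * ‖z-w‖ := by
        apply mul_le_mul_of_nonneg_right h1 (norm_nonneg _)
    _ = ((j:ℝ)+1) * ‖z‖^j * ‖z-w‖ := by ring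

lemma summable_coef {q : ℝ} (hq0 : 0 < q) (hq1 : q < 1) (a : ℕ → ℂ)
    (habs : ∀ k, ‖a k‖ = q ^ (k^2)) (z : ℂ) : Summable (fun k => a k * z ^ k) := by
  apply summable_of_ratio_norm_eventually_le (r := 1/2) (by norm_num)
  have h1 : Tendsto (fun k : ℕ => q ^ k * ‖z‖) atTop (nhds 0) := by
    simpa using (tendsto_pow_atTop_nhds_zero_of_lt_one hq0.le hq1).mul_const ‖z‖
  filter_upwards [h1.eventually (gt_mem_nhds (show (0:ℝ) < 1/2 by norm_num))] with k hk
  have e1 : ‖a (k+1) * z^(k+1)‖ = (q^(2*k+1) * ‖z‖) * (q^(k^2) * ‖z‖^k) := by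
    rw [norm_mul, habs, norm_pow]
    rw [show (k+1)^2 = k^2 + (2*k+1) by ring, pow_add, pow_succ]
    ring
  have e2 : ‖a k * z^k‖ = q^(k^2) * ‖z‖^k := by rw [norm_mul, habs, norm_pow]
  rw [e1, e2]
  have h3 : q^(2*k+1) * ‖z‖ ≤ q^k * ‖z‖ :=
    mul_le_mul_of_nonneg_right (pow_le_pow_of_le_one hq0.le hq1.le (by omega)) (norm_nonneg z)
  have h4 : (0:ℝ) ≤ q^(k^2) * ‖z‖^k := by positivity
  nlinarith [h4, mul_le_mul_of_nonneg_right (h3.trans hk.le) h4]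

lemma nat_cast_le_two_pow {n c : ℕ} (h : n + 1 ≤ 2^c) : ((n:ℝ)+1) ≤ 2^c := by
  calc ((n:ℝ)+1) = ((n+1 : ℕ) : ℝ) := by push_cast; ring
    _ ≤ ((2^c : ℕ) : ℝ) := by exact_mod_cast h
    _ = 2^c := by push_cast; ring

variable {q r : ℝ}

/-- Case A, head, pass 1. -/
lemma termA1 (hq0 : 0 < q) (hq : q ≤ 1/3) (hr0 : 0 ≤ r)
    {m k i : ℕ} (hk : k + (i+1) = m) (hlo : 1 ≤ q^(2*m) * r) :
    q^(k^2) * r^k ≤ q^(m^2) * r^m * (1/3) * ((1/27:ℝ))^i := by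
  have hm : m = k + (i+1) := hk.symm
  subst hm
  have h1 : (1:ℝ) ≤ (q^(2*(k+(i+1))) * r)^(i+1) := one_le_pow' hlo _
  have h2 : q^(k^2)*r^k ≤ q^(k^2)*r^k * (q^(2*(k+(i+1)))*r)^(i+1) :=
    le_mul_of_one_le_right (by positivity) h1
  have h3 : q^(k^2)*r^k * (q^(2*(k+(i+1)))*r)^(i+1)
      = q^((k+(i+1))^2) * r^(k+(i+1)) * q^((i+1)^2) := by ring
  have h4 : q^((i+1)^2) ≤ (1/3:ℝ)^(3*i+1) :=
    pow_third hq0.le hq (by nlinarith [Nat.le_self_pow (two_ne_zero) i])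
  have h5 : (1/3:ℝ)^(3*i+1) = (1/3) * ((1/27:ℝ))^i := by
    rw [show (1/27:ℝ) = (1/3)^3 by norm_num]; simp only [pow_add, ← pow_mul]; ring
  calc q^(k^2)*r^k ≤ q^((k+(i+1))^2) * r^(k+(i+1)) * q^((i+1)^2) := h3 ▸ h2
    _ ≤ q^((k+(i+1))^2) * r^(k+(i+1)) * ((1/3)*(1/27:ℝ)^i) :=
        mul_le_mul_of_nonneg_left (h4.trans_eq h5) (by positivity)
    _ = q^((k+(i+1))^2)*r^(k+(i+1))*(1/3)*(1/27:ℝ)^i := by ring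

/-- Case A, tail, passes 1/2. -/
lemma termA2 (hq0 : 0 < q) (hq : q ≤ 1/3) (hr0 : 0 ≤ r)
    {m : ℕ} (hhi : q^(2*m+1) * r ≤ 7/5) (n : ℕ) :
    q^((n+(m+2))^2) * r^(n+(m+2)) ≤ q^(m^2) * r^m * (49/225) * ((7/135:ℝ))^n := by
  have h3 : q^((n+(m+2))^2) * r^(n+(m+2))
      = q^(m^2) * r^m * ((q^(2*m+1)*r)^(n+2) * q^((n+2)*(n+1))) := by ring
  have h1 : (q^(2*m+1)*r)^(n+2) ≤ (7/5:ℝ)^(n+2) :=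
    pow_le_pow_left₀ (by positivity) hhi _
  have h4 : q^((n+2)*(n+1)) ≤ (1/3:ℝ)^(3*n+2) :=
    pow_third hq0.le hq (by nlinarith [Nat.le_self_pow (two_ne_zero) n])
  have h5 : (7/5:ℝ)^(n+2) * (1/3:ℝ)^(3*n+2) = (49/225) * ((7/135:ℝ))^n := by
    rw [show (7/135:ℝ) = (7/5)*(1/3)^3 by norm_num, mul_pow]
    simp only [pow_add, ← pow_mul]; norm_num; ring
  calc q^((n+(m+2))^2) * r^(n+(m+2))
      = q^(m^2) * r^m * ((q^(2*m+1)*r)^(n+2) * q^((n+2)*(n+1))) := h3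
    _ ≤ q^(m^2) * r^m * ((7/5:ℝ)^(n+2) * (1/3:ℝ)^(3*n+2)) :=
        mul_le_mul_of_nonneg_left
          (mul_le_mul h1 h4 (by positivity) (by positivity)) (by positivity)
    _ = q^(m^2) * r^m * (49/225) * ((7/135:ℝ))^n := by rw [h5]; ring

/-- Case A, head, pass 2. -/
lemma termA3 (hq0 : 0 < q) (hq : q ≤ 1/3) (hr0 : 0 ≤ r)
    {m k i : ℕ} (hk : k + (i+1) = m) (hloc1 : 53/125 ≤ q^(2*m+1) * r) :
    q^(k^2) * r^k ≤ q^(m^2) * r^m * (125/477) * ((125/4293:ℝ))^i := by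
  have hm : m = k + (i+1) := hk.symm
  subst hm
  have h1 : (1:ℝ) ≤ ((125/53) * (q^(2*(k+(i+1))+1) * r))^(i+1) :=
    one_le_pow' (by linarith) _
  have h2 : q^(k^2)*r^k ≤ q^(k^2)*r^k * ((125/53)*(q^(2*(k+(i+1))+1)*r))^(i+1) :=
    le_mul_of_one_le_right (by positivity) h1
  have h3 : q^(k^2)*r^k * ((125/53)*(q^(2*(k+(i+1))+1)*r))^(i+1)
      = q^((k+(i+1))^2) * r^(k+(i+1)) * ((125/53:ℝ)^(i+1) * q^((i+1)*(i+2))) := by ring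
  have h4 : q^((i+1)*(i+2)) ≤ (1/3:ℝ)^(4*i+2) :=
    pow_third hq0.le hq (by nlinarith [Nat.le_self_pow (two_ne_zero) i])
  have h5 : (125/53:ℝ)^(i+1) * (1/3:ℝ)^(4*i+2) = (125/477) * ((125/4293:ℝ))^i := by
    rw [show (125/4293:ℝ) = (125/53)*(1/3)^4 by norm_num, mul_pow]
    simp only [pow_add, ← pow_mul]; norm_num; ring
  calc q^(k^2)*r^k ≤ q^((k+(i+1))^2) * r^(k+(i+1)) * ((125/53:ℝ)^(i+1) * q^((i+1)*(i+2))) :=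
        h3 ▸ h2
    _ ≤ q^((k+(i+1))^2) * r^(k+(i+1)) * ((125/477) * ((125/4293:ℝ))^i) := by
        apply mul_le_mul_of_nonneg_left _ (by positivity)
        calc (125/53:ℝ)^(i+1) * q^((i+1)*(i+2)) ≤ (125/53:ℝ)^(i+1) * (1/3:ℝ)^(4*i+2) :=
              mul_le_mul_of_nonneg_left h4 (by positivity)
          _ = (125/477) * ((125/4293:ℝ))^i := h5
    _ = q^((k+(i+1))^2) * r^(k+(i+1)) * (125/477) * ((125/4293:ℝ))^i := by ring

/-- Case A, contraction tail term. -/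
lemma termA4 (hq0 : 0 < q) (hq : q ≤ 1/3) (hr0 : 0 ≤ r)
    {m : ℕ} (hhi : q^(2*m+1) * r ≤ 7/5) (n : ℕ) :
    ((n:ℝ)+2) * (q^((n+(m+2))^2) * r^(2*m+(n+1)))
      ≤ q^((m+1)^2) * r^(2*m) * (14/45) * ((14/135:ℝ))^n := by
  have h3 : q^((n+(m+2))^2) * r^(2*m+(n+1))
      = q^((m+1)^2) * r^(2*m) * ((q^(2*m+1)*r)^(n+1) * q^((n+2)*(n+1))) := by ring
  have h1 : (q^(2*m+1)*r)^(n+1) ≤ (7/5:ℝ)^(n+1) := pow_le_pow_left₀ (by positivity) hhi _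
  have h4 : q^((n+2)*(n+1)) ≤ (1/3:ℝ)^(3*n+2) :=
    pow_third hq0.le hq (by nlinarith [Nat.le_self_pow (two_ne_zero) n])
  have hn2 : ((n:ℝ)+2) ≤ 2^(n+1) := by
    have h : n+2 ≤ 2^(n+1) := Nat.succ_le_of_lt (Nat.lt_two_pow_self (n := n+1))
    calc ((n:ℝ)+2) = ((n+2 : ℕ) : ℝ) := by push_cast; ring
      _ ≤ ((2^(n+1) : ℕ) : ℝ) := by exact_mod_cast h
      _ = 2^(n+1) := by push_cast; ring
  have h5 : (2:ℝ)^(n+1) * ((7/5:ℝ)^(n+1) * (1/3:ℝ)^(3*n+2)) = (14/45) * ((14/135:ℝ))^n := by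
    rw [show (14/135:ℝ) = 2*((7/5)*(1/3)^3) by norm_num, mul_pow, mul_pow]
    simp only [pow_add, ← pow_mul]; norm_num; ring
  calc ((n:ℝ)+2) * (q^((n+(m+2))^2) * r^(2*m+(n+1)))
      = ((n:ℝ)+2) * (q^((m+1)^2) * r^(2*m) * ((q^(2*m+1)*r)^(n+1) * q^((n+2)*(n+1)))) := by
        rw [h3]
    _ ≤ (2:ℝ)^(n+1) * (q^((m+1)^2) * r^(2*m) * ((7/5:ℝ)^(n+1) * (1/3:ℝ)^(3*n+2))) := by
        apply mul_le_mul hn2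
        · exact mul_le_mul_of_nonneg_left
            (mul_le_mul h1 h4 (by positivity) (by positivity)) (by positivity)
        · positivity
        · positivity
    _ = q^((m+1)^2) * r^(2*m) * ((2:ℝ)^(n+1) * ((7/5:ℝ)^(n+1) * (1/3:ℝ)^(3*n+2))) := by ring
    _ = q^((m+1)^2) * r^(2*m) * (14/45) * ((14/135:ℝ))^n := by rw [h5]; ring

/-- Case A, contraction head term. -/
lemma termA5 (hq0 : 0 < q) (hq : q ≤ 1/3) (hr0 : 0 ≤ r)
    {m k i : ℕ} (hk : k + (i+1) = m) (hloc2 : 1/2 ≤ q^(2*m+1) * r) :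
    ((i:ℝ)+1) * (q^(k^2) * r^(2*k+i))
      ≤ q^((m+1)^2) * r^(2*m) * (4/9) * ((4/81:ℝ))^i := by
  have hm : m = k + (i+1) := hk.symm
  subst hm
  have h1 : (1:ℝ) ≤ ((2:ℝ) * (q^(2*(k+(i+1))+1) * r))^(i+2) := one_le_pow' (by linarith) _
  have h2 : q^(k^2)*r^(2*k+i) ≤ q^(k^2)*r^(2*k+i) * ((2:ℝ)*(q^(2*(k+(i+1))+1)*r))^(i+2) :=
    le_mul_of_one_le_right (by positivity) h1
  have h3 : q^(k^2)*r^(2*k+i) * ((2:ℝ)*(q^(2*(k+(i+1))+1)*r))^(i+2)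
      = q^((k+(i+1)+1)^2) * r^(2*(k+(i+1))) * ((2:ℝ)^(i+2) * q^((i+1)*(i+2))) := by ring
  have h4 : q^((i+1)*(i+2)) ≤ (1/3:ℝ)^(4*i+2) :=
    pow_third hq0.le hq (by nlinarith [Nat.le_self_pow (two_ne_zero) i])
  have hi1 : ((i:ℝ)+1) ≤ 2^i := nat_cast_le_two_pow (Nat.lt_two_pow_self (n := i))
  have h5 : (2:ℝ)^i * ((2:ℝ)^(i+2) * (1/3:ℝ)^(4*i+2)) = (4/9) * ((4/81:ℝ))^i := by
    rw [show (4/81:ℝ) = 2*(2*(1/3)^4) by norm_num, mul_pow, mul_pow]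
    simp only [pow_add, ← pow_mul]; norm_num; ring
  calc ((i:ℝ)+1) * (q^(k^2) * r^(2*k+i))
      ≤ ((i:ℝ)+1) * (q^((k+(i+1)+1)^2) * r^(2*(k+(i+1))) * ((2:ℝ)^(i+2) * q^((i+1)*(i+2)))) :=
        mul_le_mul_of_nonneg_left (h3 ▸ h2) (by positivity)
    _ ≤ (2:ℝ)^i * (q^((k+(i+1)+1)^2) * r^(2*(k+(i+1))) * ((2:ℝ)^(i+2) * (1/3:ℝ)^(4*i+2))) := by
        apply mul_le_mul hi1
        · exact mul_le_mul_of_nonneg_left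
            (mul_le_mul_of_nonneg_left h4 (by positivity)) (by positivity)
        · positivity
        · positivity
    _ = q^((k+(i+1)+1)^2) * r^(2*(k+(i+1))) * ((2:ℝ)^i * ((2:ℝ)^(i+2) * (1/3:ℝ)^(4*i+2))) := by
        ring
    _ = q^((k+(i+1)+1)^2) * r^(2*(k+(i+1))) * (4/9) * ((4/81:ℝ))^i := by rw [h5]; ring

/-- Case B, head, pass 1. -/
lemma termB1 (hq0 : 0 < q) (hq : q ≤ 1/3) (hr0 : 0 ≤ r)
    {s k i : ℕ} (hk : k + (i+1) = s) (hT : 7/5 ≤ q^(2*s+1) * r) :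
    q^(k^2) * r^k ≤ q^((s+1)^2) * r^(s+1) * (25/441) * ((5/567:ℝ))^i := by
  have hm : s = k + (i+1) := hk.symm
  subst hm
  have h1 : (1:ℝ) ≤ ((5/7) * (q^(2*(k+(i+1))+1) * r))^(i+2) := one_le_pow' (by linarith) _
  have h2 : q^(k^2)*r^k ≤ q^(k^2)*r^k * ((5/7)*(q^(2*(k+(i+1))+1)*r))^(i+2) :=
    le_mul_of_one_le_right (by positivity) h1
  have h3 : q^(k^2)*r^k * ((5/7)*(q^(2*(k+(i+1))+1)*r))^(i+2)
      = q^((k+(i+1)+1)^2) * r^(k+(i+1)+1) * ((5/7:ℝ)^(i+2) * q^((i+1)*(i+2))) := by ring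
  have h4 : q^((i+1)*(i+2)) ≤ (1/3:ℝ)^(4*i+2) :=
    pow_third hq0.le hq (by nlinarith [Nat.le_self_pow (two_ne_zero) i])
  have h5 : (5/7:ℝ)^(i+2) * (1/3:ℝ)^(4*i+2) = (25/441) * ((5/567:ℝ))^i := by
    rw [show (5/567:ℝ) = (5/7)*(1/3)^4 by norm_num, mul_pow]
    simp only [pow_add, ← pow_mul]; norm_num; ring
  calc q^(k^2)*r^k ≤ q^((k+(i+1)+1)^2) * r^(k+(i+1)+1) * ((5/7:ℝ)^(i+2) * q^((i+1)*(i+2))) :=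
        h3 ▸ h2
    _ ≤ q^((k+(i+1)+1)^2) * r^(k+(i+1)+1) * ((25/441) * ((5/567:ℝ))^i) := by
        apply mul_le_mul_of_nonneg_left _ (by positivity)
        calc (5/7:ℝ)^(i+2) * q^((i+1)*(i+2)) ≤ (5/7:ℝ)^(i+2) * (1/3:ℝ)^(4*i+2) :=
              mul_le_mul_of_nonneg_left h4 (by positivity)
          _ = (25/441) * ((5/567:ℝ))^i := h5
    _ = q^((k+(i+1)+1)^2) * r^(k+(i+1)+1) * (25/441) * ((5/567:ℝ))^i := by ring

/-- Case B, tail, pass 1. -/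
lemma termB2 (hq0 : 0 < q) (hq : q ≤ 1/3) (hr0 : 0 ≤ r)
    {s : ℕ} (hhi : q^(2*s+2) * r ≤ 1) (n : ℕ) :
    q^((n+(s+2))^2) * r^(n+(s+2)) ≤ q^((s+1)^2) * r^(s+1) * (1/3) * ((1/27:ℝ))^n := by
  have h3 : q^((n+(s+2))^2) * r^(n+(s+2))
      = q^((s+1)^2) * r^(s+1) * ((q^(2*s+2)*r)^(n+1) * q^((n+1)^2)) := by ring
  have h1 : (q^(2*s+2)*r)^(n+1) ≤ 1 := by
    calc (q^(2*s+2)*r)^(n+1) ≤ 1^(n+1) := pow_le_pow_left₀ (by positivity) hhi _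
      _ = 1 := one_pow _
  have h4 : q^((n+1)^2) ≤ (1/3:ℝ)^(3*n+1) :=
    pow_third hq0.le hq (by nlinarith [Nat.le_self_pow (two_ne_zero) n])
  have h5 : (1/3:ℝ)^(3*n+1) = (1/3) * ((1/27:ℝ))^n := by
    rw [show (1/27:ℝ) = (1/3)^3 by norm_num]; simp only [pow_add, ← pow_mul]; ring
  calc q^((n+(s+2))^2) * r^(n+(s+2))
      = q^((s+1)^2) * r^(s+1) * ((q^(2*s+2)*r)^(n+1) * q^((n+1)^2)) := h3
    _ ≤ q^((s+1)^2) * r^(s+1) * (1 * ((1/3)*(1/27:ℝ)^n)) := by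
        apply mul_le_mul_of_nonneg_left _ (by positivity)
        exact mul_le_mul h1 (h4.trans_eq h5) (by positivity) (by norm_num)
    _ = q^((s+1)^2) * r^(s+1) * (1/3) * ((1/27:ℝ))^n := by ring

/-- Case B, contraction tail term. -/
lemma termB4 (hq0 : 0 < q) (hq : q ≤ 1/3) (hr0 : 0 ≤ r)
    {s : ℕ} (hlocB : q^(2*s+1) * r ≤ 42/25) (n : ℕ) :
    ((n:ℝ)+1) * (q^((n+(s+2))^2) * r^(2*(s+1)+n))
      ≤ q^(s^2) * r^(2*s) * (196/625) * ((84/2025:ℝ))^n := by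
  have h3 : q^((n+(s+2))^2) * r^(2*(s+1)+n)
      = q^(s^2) * r^(2*s) * ((q^(2*s+1)*r)^(n+2) * q^((n+1)*(n+2))) := by ring
  have h1 : (q^(2*s+1)*r)^(n+2) ≤ (42/25:ℝ)^(n+2) := pow_le_pow_left₀ (by positivity) hlocB _
  have h4 : q^((n+1)*(n+2)) ≤ (1/3:ℝ)^(4*n+2) :=
    pow_third hq0.le hq (by nlinarith [Nat.le_self_pow (two_ne_zero) n])
  have hn1 : ((n:ℝ)+1) ≤ 2^n := nat_cast_le_two_pow (Nat.lt_two_pow_self (n := n))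
  have h5 : ((42/25:ℝ))^(n+2) * ((2:ℝ)^n * (1/3:ℝ)^(4*n+2)) = (196/625) * ((84/2025:ℝ))^n := by
    rw [show (84/2025:ℝ) = (42/25)*(2*(1/3)^4) by norm_num, mul_pow, mul_pow]
    simp only [pow_add, ← pow_mul]; norm_num; ring
  calc ((n:ℝ)+1) * (q^((n+(s+2))^2) * r^(2*(s+1)+n))
      = ((n:ℝ)+1) * (q^(s^2) * r^(2*s) * ((q^(2*s+1)*r)^(n+2) * q^((n+1)*(n+2)))) := by rw [h3]
    _ ≤ (2:ℝ)^n * (q^(s^2) * r^(2*s) * (((42/25:ℝ))^(n+2) * (1/3:ℝ)^(4*n+2))) := by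
        apply mul_le_mul hn1
        · exact mul_le_mul_of_nonneg_left
            (mul_le_mul h1 h4 (by positivity) (by positivity)) (by positivity)
        · positivity
        · positivity
    _ = q^(s^2) * r^(2*s) * (((42/25:ℝ))^(n+2) * ((2:ℝ)^n * (1/3:ℝ)^(4*n+2))) := by ring
    _ = q^(s^2) * r^(2*s) * (196/625) * ((84/2025:ℝ))^n := by rw [h5]; ring

/-- Case B, contraction head term. -/
lemma termB5 (hq0 : 0 < q) (hq : q ≤ 1/3) (hr0 : 0 ≤ r)
    {s k i : ℕ} (hk : k + (i+1) = s) (hT : 7/5 ≤ q^(2*s+1) * r) :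
    ((i:ℝ)+2) * (q^(k^2) * r^(2*k+(i+1)))
      ≤ q^(s^2) * r^(2*s) * (10/63) * ((10/567:ℝ))^i := by
  have hm : s = k + (i+1) := hk.symm
  subst hm
  have h1 : (1:ℝ) ≤ ((5/7) * (q^(2*(k+(i+1))+1) * r))^(i+1) := one_le_pow' (by linarith) _
  have h2 : q^(k^2)*r^(2*k+(i+1)) ≤ q^(k^2)*r^(2*k+(i+1)) * ((5/7)*(q^(2*(k+(i+1))+1)*r))^(i+1) :=
    le_mul_of_one_le_right (by positivity) h1
  have h3 : q^(k^2)*r^(2*k+(i+1)) * ((5/7)*(q^(2*(k+(i+1))+1)*r))^(i+1)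
      = q^((k+(i+1))^2) * r^(2*(k+(i+1))) * ((5/7:ℝ)^(i+1) * q^((i+1)*(i+2))) := by ring
  have h4 : q^((i+1)*(i+2)) ≤ (1/3:ℝ)^(4*i+2) :=
    pow_third hq0.le hq (by nlinarith [Nat.le_self_pow (two_ne_zero) i])
  have hi2 : ((i:ℝ)+2) ≤ 2^(i+1) := by
    have h : i+2 ≤ 2^(i+1) := Nat.succ_le_of_lt (Nat.lt_two_pow_self (n := i+1))
    calc ((i:ℝ)+2) = ((i+2 : ℕ) : ℝ) := by push_cast; ring
      _ ≤ ((2^(i+1) : ℕ) : ℝ) := by exact_mod_cast h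
      _ = 2^(i+1) := by push_cast; ring
  have h5 : (2:ℝ)^(i+1) * ((5/7:ℝ)^(i+1) * (1/3:ℝ)^(4*i+2)) = (10/63) * ((10/567:ℝ))^i := by
    rw [show (10/567:ℝ) = 2*((5/7)*(1/3)^4) by norm_num, mul_pow, mul_pow]
    simp only [pow_add, ← pow_mul]; norm_num; ring
  calc ((i:ℝ)+2) * (q^(k^2) * r^(2*k+(i+1)))
      ≤ ((i:ℝ)+2) * (q^((k+(i+1))^2) * r^(2*(k+(i+1))) * ((5/7:ℝ)^(i+1) * q^((i+1)*(i+2)))) :=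
        mul_le_mul_of_nonneg_left (h3 ▸ h2) (by positivity)
    _ ≤ (2:ℝ)^(i+1) * (q^((k+(i+1))^2) * r^(2*(k+(i+1))) * ((5/7:ℝ)^(i+1) * (1/3:ℝ)^(4*i+2))) := by
        apply mul_le_mul hi2
        · exact mul_le_mul_of_nonneg_left
            (mul_le_mul_of_nonneg_left h4 (by positivity)) (by positivity)
        · positivity
        · positivity
    _ = q^((k+(i+1))^2) * r^(2*(k+(i+1))) * ((2:ℝ)^(i+1) * ((5/7:ℝ)^(i+1) * (1/3:ℝ)^(4*i+2))) := by
        ring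
    _ = q^((k+(i+1))^2) * r^(2*(k+(i+1))) * (10/63) * ((10/567:ℝ))^i := by rw [h5]; ring



lemma caseA {q : ℝ} (hq0 : 0 < q) (hq : q ≤ 1/3) (a : ℕ → ℂ)
    (habs : ∀ k, ‖a k‖ = q ^ (k^2)) {z w : ℂ} (hwz : ‖w‖ = ‖z‖) (m : ℕ)
    (hlo : 1 ≤ q ^ (2*m) * ‖z‖) (hhi : q ^ (2*m+1) * ‖z‖ ≤ 7/5)
    (hz : ∑' k, a k * z ^ k = 0) (hw : ∑' k, a k * w ^ k = 0) : z = w := by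
  have hq1 : q < 1 := hq.trans_lt (by norm_num)
  set r := ‖z‖ with hrdef
  have hr0 : 0 < r := by
    by_contra h
    push_neg at h
    nlinarith [pow_pos hq0 (2*m), mul_nonpos_of_nonneg_of_nonpos (pow_pos hq0 (2*m)).le h]
  have hFz : ∀ k, ‖a k * z ^ k‖ = q ^ (k^2) * r ^ k := fun k => by
    rw [norm_mul, habs, norm_pow]
  have hFw : ∀ k, ‖a k * w ^ k‖ = q ^ (k^2) * r ^ k := fun k => by
    rw [norm_mul, habs, norm_pow, hwz]
  have hsz : Summable (fun k => a k * z ^ k) := summable_coef hq0 hq1 a habs z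
  have hsw : Summable (fun k => a k * w ^ k) := summable_coef hq0 hq1 a habs w
  have hSA : (0:ℝ) < q^(m^2) * r^m := by positivity
  -- split the equation
  have hsplit := split2 hsz m
  rw [hz] at hsplit
  have hpair : a m * z^m + a (m+1) * z^(m+1)
      = -((∑ k ∈ range m, a k * z^k) + ∑' n, a (n+(m+2)) * z^(n+(m+2))) := by
    have := hsplit
    linear_combination -this
  -- bounds on head and tail
  have hTail1 : ‖∑' n, a (n+(m+2)) * z^(n+(m+2))‖
      ≤ (q^(m^2) * r^m * (49/225)) / (1 - 7/135) := by
    apply norm_tsum_le_geom (by norm_num) (by norm_num)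
    intro n
    rw [hFz]
    have := termA2 hq0 hq hr0.le hhi n
    linarith
  have pairBound : ∀ C : ℝ, 0 ≤ C →
      (‖∑ k ∈ range m, a k * z^k‖ ≤ q^(m^2) * r^m * C) →
      q^(m^2) * r^m ≤ (q^(m^2)*r^m) * (C + 147/640) + (q^(m^2)*r^m) * (q^(2*m+1) * r) := by
    intro C hC hHead
    have h1 : ‖a m * z^m + a (m+1) * z^(m+1)‖
        ≤ q^(m^2)*r^m * C + (q^(m^2) * r^m * (49/225)) / (1 - 7/135) := by
      rw [hpair, norm_neg]
      calc ‖(∑ k ∈ range m, a k * z^k) + ∑' n, a (n+(m+2)) * z^(n+(m+2))‖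
          ≤ ‖∑ k ∈ range m, a k * z^k‖ + ‖∑' n, a (n+(m+2)) * z^(n+(m+2))‖ := norm_add_le _ _
        _ ≤ q^(m^2)*r^m * C + (q^(m^2) * r^m * (49/225)) / (1 - 7/135) := by
            exact add_le_add hHead hTail1
    have h2 : q^(m^2) * r^m ≤ ‖a m * z^m + a (m+1) * z^(m+1)‖ + q^((m+1)^2) * r^(m+1) := by
      have e1 : a m * z^m = (a m * z^m + a (m+1)*z^(m+1)) - a (m+1)*z^(m+1) := by ring
      calc q^(m^2) * r^m = ‖a m * z^m‖ := (hFz m).symm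
        _ = ‖(a m * z^m + a (m+1)*z^(m+1)) - a (m+1)*z^(m+1)‖ := by rw [← e1]
        _ ≤ ‖a m * z^m + a (m+1)*z^(m+1)‖ + ‖a (m+1)*z^(m+1)‖ := norm_sub_le _ _
        _ = ‖a m * z^m + a (m+1)*z^(m+1)‖ + q^((m+1)^2) * r^(m+1) := by rw [hFz]
    have e2 : q^((m+1)^2) * r^(m+1) = (q^(m^2)*r^m) * (q^(2*m+1) * r) := by ring
    have e3 : (q^(m^2) * r^m * (49/225)) / (1 - 7/135) = (q^(m^2)*r^m) * (147/640) := by ring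
    calc q^(m^2) * r^m ≤ ‖a m * z^m + a (m+1) * z^(m+1)‖ + q^((m+1)^2) * r^(m+1) := h2
      _ ≤ (q^(m^2)*r^m * C + (q^(m^2) * r^m * (49/225)) / (1 - 7/135))
            + (q^(m^2)*r^m) * (q^(2*m+1) * r) := by linarith
      _ = (q^(m^2)*r^m) * (C + 147/640) + (q^(m^2)*r^m) * (q^(2*m+1) * r) := by
          rw [e3]; ring
  -- pass 1
  have hHead1 : ‖∑ k ∈ range m, a k * z^k‖ ≤ q^(m^2) * r^m * (9/26) := by
    have h := norm_sum_le_geom (g := fun k => a k * z^k) (p := m)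
      (A := q^(m^2) * r^m * (1/3)) (x := (1/27:ℝ)) (by positivity) (by norm_num) (by norm_num)
      (fun i hi => by
        rw [hFz]
        have := termA1 hq0 hq hr0.le (show (m-1-i) + (i+1) = m by omega) hlo
        linarith)
    calc ‖∑ k ∈ range m, a k * z^k‖ ≤ (q^(m^2) * r^m * (1/3)) / (1 - 1/27) := h
      _ = q^(m^2) * r^m * (9/26) := by ring
  have hloc1 : 53/125 ≤ q^(2*m+1) * r := by
    have h := pairBound (9/26) (by norm_num) hHead1
    nlinarith [hSA]
  -- pass 2
  have hHead2 : ‖∑ k ∈ range m, a k * z^k‖ ≤ q^(m^2) * r^m * (1125/4168) := by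
    have h := norm_sum_le_geom (g := fun k => a k * z^k) (p := m)
      (A := q^(m^2) * r^m * (125/477)) (x := (125/4293:ℝ)) (by positivity) (by norm_num)
      (by norm_num)
      (fun i hi => by
        rw [hFz]
        have := termA3 hq0 hq hr0.le (show (m-1-i) + (i+1) = m by omega) hloc1
        linarith)
    calc ‖∑ k ∈ range m, a k * z^k‖ ≤ (q^(m^2) * r^m * (125/477)) / (1 - 125/4293) := h
      _ = q^(m^2) * r^m * (1125/4168) := by ring
  have hloc2 : 1/2 ≤ q^(2*m+1) * r := by
    have h := pairBound (1125/4168) (by norm_num) hHead2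
    nlinarith [hSA]
  -- contraction
  have hD : (∑' k, (a k * z^k * w^m - a k * w^k * z^m)) = 0 := by
    rw [Summable.tsum_sub (hsz.mul_right (w^m)) (hsw.mul_right (z^m)), tsum_mul_right, tsum_mul_right,
      hz, hw]
    ring
  have hsD : Summable (fun k => a k * z^k * w^m - a k * w^k * z^m) :=
    (hsz.mul_right (w^m)).sub (hsw.mul_right (z^m))
  have hsplitD := split2 hsD m
  rw [hD] at hsplitD
  have hDm : a m * z^m * w^m - a m * w^m * z^m = 0 := by ring
  have hkey : a (m+1) * z^(m+1) * w^m - a (m+1) * w^(m+1) * z^m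
      = -((∑ k ∈ range m, (a k * z^k * w^m - a k * w^k * z^m))
          + ∑' n, (a (n+(m+2)) * z^(n+(m+2)) * w^m - a (n+(m+2)) * w^(n+(m+2)) * z^m)) := by
    linear_combination -hsplitD - hDm
  set Δ := ‖z - w‖ with hΔdef
  have hΔ0 : 0 ≤ Δ := norm_nonneg _
  have hQ : ‖a (m+1) * z^(m+1) * w^m - a (m+1) * w^(m+1) * z^m‖
      = q^((m+1)^2) * r^(2*m) * Δ := by
    have e1 : a (m+1) * z^(m+1) * w^m - a (m+1) * w^(m+1) * z^m
        = a (m+1) * ((z*w)^m * (z - w)) := by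
      rw [pow_succ, pow_succ]; ring
    rw [e1, norm_mul, norm_mul, habs, norm_pow, norm_mul, hwz]
    simp only [← hrdef, ← hΔdef]
    ring
  -- tail of contraction
  have hDtail : ‖∑' n, (a (n+(m+2)) * z^(n+(m+2)) * w^m - a (n+(m+2)) * w^(n+(m+2)) * z^m)‖
      ≤ (q^((m+1)^2) * r^(2*m) * Δ * (14/45)) / (1 - 14/135) := by
    apply norm_tsum_le_geom (by norm_num) (by norm_num)
    intro n
    have e1 : a (n+(m+2)) * z^(n+(m+2)) * w^m - a (n+(m+2)) * w^(n+(m+2)) * z^m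
        = a (n+(m+2)) * ((z*w)^m * (z^(n+2) - w^(n+2))) := by
      rw [show n+(m+2) = m + (n+2) by ring, pow_add, pow_add, pow_add]
      ring
    rw [e1, norm_mul, norm_mul, habs, norm_pow, norm_mul, hwz]
    have h2 : ‖z^(n+2) - w^(n+2)‖ ≤ ((n:ℝ)+2) * r^(n+1) * Δ := by
      have hpp := norm_pow_sub_pow z w hwz (n+1)
      push_cast at hpp
      calc ‖z^(n+2) - w^(n+2)‖ = ‖z^(n+1+1) - w^(n+1+1)‖ := by norm_num
        _ ≤ ((n:ℝ)+1+1) * ‖z‖^(n+1) * ‖z-w‖ := hpp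
        _ = ((n:ℝ)+2) * r^(n+1) * Δ := by simp only [← hrdef, ← hΔdef]; ring
    have h3 : (0:ℝ) ≤ q^((n+(m+2))^2) * (‖z‖*‖z‖)^m := by positivity
    calc q^((n+(m+2))^2) * ((‖z‖*‖z‖)^m * ‖z^(n+2) - w^(n+2)‖)
        ≤ q^((n+(m+2))^2) * ((‖z‖*‖z‖)^m * (((n:ℝ)+2) * r^(n+1) * Δ)) := by
          apply mul_le_mul_of_nonneg_left _ (by positivity)
          exact mul_le_mul_of_nonneg_left h2 (by positivity)
      _ = (((n:ℝ)+2) * (q^((n+(m+2))^2) * r^(2*m+(n+1)))) * Δ := by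
          simp only [← hrdef, ← hΔdef]; ring
      _ ≤ (q^((m+1)^2) * r^(2*m) * (14/45) * ((14/135:ℝ))^n) * Δ := by
          apply mul_le_mul_of_nonneg_right (termA4 hq0 hq hr0.le hhi n) hΔ0
      _ = q^((m+1)^2) * r^(2*m) * Δ * (14/45) * ((14/135:ℝ))^n := by ring
  -- head of contraction
  have hDhead : ‖∑ k ∈ range m, (a k * z^k * w^m - a k * w^k * z^m)‖
      ≤ (q^((m+1)^2) * r^(2*m) * Δ * (4/9)) / (1 - 4/81) := by
    apply norm_sum_le_geom (by positivity) (by norm_num) (by norm_num)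
    intro i hi
    set k := m - 1 - i with hkdef
    have hk : k + (i+1) = m := by omega
    have e1 : a k * z^k * w^m - a k * w^k * z^m
        = a k * ((z*w)^k * (w^(i+1) - z^(i+1))) := by
      rw [show m = k + (i+1) by omega, pow_add, pow_add]
      ring
    rw [e1, norm_mul, norm_mul, habs, norm_pow, norm_mul, hwz]
    have h2 : ‖w^(i+1) - z^(i+1)‖ ≤ ((i:ℝ)+1) * r^i * Δ := by
      rw [norm_sub_rev]
      have := norm_pow_sub_pow z w hwz i
      calc ‖z^(i+1) - w^(i+1)‖ ≤ ((i:ℝ)+1) * ‖z‖^i * ‖z-w‖ := this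
        _ = ((i:ℝ)+1) * r^i * Δ := by simp only [← hrdef, ← hΔdef]
    calc q^(k^2) * ((‖z‖*‖z‖)^k * ‖w^(i+1) - z^(i+1)‖)
        ≤ q^(k^2) * ((‖z‖*‖z‖)^k * (((i:ℝ)+1) * r^i * Δ)) := by
          apply mul_le_mul_of_nonneg_left _ (by positivity)
          exact mul_le_mul_of_nonneg_left h2 (by positivity)
      _ = (((i:ℝ)+1) * (q^(k^2) * r^(2*k+i))) * Δ := by
          simp only [← hrdef, ← hΔdef]; ring
      _ ≤ (q^((m+1)^2) * r^(2*m) * (4/9) * ((4/81:ℝ))^i) * Δ := by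
          apply mul_le_mul_of_nonneg_right (termA5 hq0 hq hr0.le hk hloc2) hΔ0
      _ = q^((m+1)^2) * r^(2*m) * Δ * (4/9) * ((4/81:ℝ))^i := by ring
  -- combine
  have hfinal : q^((m+1)^2) * r^(2*m) * Δ
      ≤ q^((m+1)^2) * r^(2*m) * Δ * (36/77) + q^((m+1)^2) * r^(2*m) * Δ * (42/121) := by
    have e4 : (q^((m+1)^2) * r^(2*m) * Δ * (4/9)) / (1 - 4/81)
        = q^((m+1)^2) * r^(2*m) * Δ * (36/77) := by ring
    have e5 : (q^((m+1)^2) * r^(2*m) * Δ * (14/45)) / (1 - 14/135)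
        = q^((m+1)^2) * r^(2*m) * Δ * (42/121) := by ring
    calc q^((m+1)^2) * r^(2*m) * Δ
        = ‖a (m+1) * z^(m+1) * w^m - a (m+1) * w^(m+1) * z^m‖ := hQ.symm
      _ ≤ ‖∑ k ∈ range m, (a k * z^k * w^m - a k * w^k * z^m)‖
          + ‖∑' n, (a (n+(m+2)) * z^(n+(m+2)) * w^m - a (n+(m+2)) * w^(n+(m+2)) * z^m)‖ := by
          rw [hkey, norm_neg]
          exact norm_add_le _ _
      _ ≤ q^((m+1)^2) * r^(2*m) * Δ * (36/77) + q^((m+1)^2) * r^(2*m) * Δ * (42/121) := by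
          rw [← e4, ← e5]
          exact add_le_add hDhead hDtail
  have hP : (0:ℝ) < q^((m+1)^2) * r^(2*m) := by positivity
  have hΔz : Δ = 0 := by nlinarith [hP, hΔ0, hfinal]
  have hzw0 : z - w = 0 := norm_eq_zero.mp hΔz
  exact sub_eq_zero.mp hzw0

lemma caseB {q : ℝ} (hq0 : 0 < q) (hq : q ≤ 1/3) (a : ℕ → ℂ)
    (habs : ∀ k, ‖a k‖ = q ^ (k^2)) {z w : ℂ} (hwz : ‖w‖ = ‖z‖) (s : ℕ)
    (hT : 7/5 ≤ q ^ (2*s+1) * ‖z‖) (hhi : q ^ (2*s+2) * ‖z‖ ≤ 1)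
    (hz : ∑' k, a k * z ^ k = 0) (hw : ∑' k, a k * w ^ k = 0) : z = w := by
  have hq1 : q < 1 := hq.trans_lt (by norm_num)
  set r := ‖z‖ with hrdef
  have hr0 : 0 < r := by
    by_contra h
    push_neg at h
    nlinarith [pow_pos hq0 (2*s+1), mul_nonpos_of_nonneg_of_nonpos (pow_pos hq0 (2*s+1)).le h]
  have hFz : ∀ k, ‖a k * z ^ k‖ = q ^ (k^2) * r ^ k := fun k => by
    rw [norm_mul, habs, norm_pow]
  have hsz : Summable (fun k => a k * z ^ k) := summable_coef hq0 hq1 a habs z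
  have hsw : Summable (fun k => a k * w ^ k) := summable_coef hq0 hq1 a habs w
  have hSB : (0:ℝ) < q^((s+1)^2) * r^(s+1) := by positivity
  have hK : (0:ℝ) < q^(s^2) * r^s := by positivity
  -- localization: split at pivot s
  have hsplit := split2 hsz s
  rw [hz] at hsplit
  have hpair : a s * z^s + a (s+1) * z^(s+1)
      = -((∑ k ∈ range s, a k * z^k) + ∑' n, a (n+(s+2)) * z^(n+(s+2))) := by
    linear_combination -hsplit
  have hHead1 : ‖∑ k ∈ range s, a k * z^k‖ ≤ q^((s+1)^2) * r^(s+1) * (225/3934) := by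
    have h := norm_sum_le_geom (g := fun k => a k * z^k) (p := s)
      (A := q^((s+1)^2) * r^(s+1) * (25/441)) (x := (5/567:ℝ)) (by positivity) (by norm_num)
      (by norm_num)
      (fun i hi => by
        rw [hFz]
        have := termB1 hq0 hq hr0.le (show (s-1-i) + (i+1) = s by omega) hT
        linarith)
    calc ‖∑ k ∈ range s, a k * z^k‖ ≤ (q^((s+1)^2) * r^(s+1) * (25/441)) / (1 - 5/567) := h
      _ = q^((s+1)^2) * r^(s+1) * (225/3934) := by ring
  have hTail1 : ‖∑' n, a (n+(s+2)) * z^(n+(s+2))‖ ≤ q^((s+1)^2) * r^(s+1) * (9/26) := by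
    have h := norm_tsum_le_geom (g := fun n => a (n+(s+2)) * z^(n+(s+2)))
      (A := q^((s+1)^2) * r^(s+1) * (1/3)) (x := (1/27:ℝ))
      (by norm_num) (by norm_num)
      (fun n => by
        rw [hFz]
        have := termB2 hq0 hq hr0.le hhi n
        linarith)
    calc ‖∑' n, a (n+(s+2)) * z^(n+(s+2))‖ ≤ (q^((s+1)^2) * r^(s+1) * (1/3)) / (1 - 1/27) := h
      _ = q^((s+1)^2) * r^(s+1) * (9/26) := by ring
  have hlocB : q^(2*s+1) * r ≤ 42/25 := by
    have h1 : ‖a s * z^s + a (s+1) * z^(s+1)‖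
        ≤ q^((s+1)^2) * r^(s+1) * (225/3934) + q^((s+1)^2) * r^(s+1) * (9/26) := by
      rw [hpair, norm_neg]
      exact (norm_add_le _ _).trans (add_le_add hHead1 hTail1)
    have h2 : q^((s+1)^2) * r^(s+1) ≤ ‖a s * z^s + a (s+1) * z^(s+1)‖ + q^(s^2) * r^s := by
      have e1 : a (s+1) * z^(s+1) = (a s * z^s + a (s+1)*z^(s+1)) - a s*z^s := by ring
      calc q^((s+1)^2) * r^(s+1) = ‖a (s+1) * z^(s+1)‖ := (hFz (s+1)).symm
        _ = ‖(a s * z^s + a (s+1)*z^(s+1)) - a s*z^s‖ := by rw [← e1]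
        _ ≤ ‖a s * z^s + a (s+1)*z^(s+1)‖ + ‖a s*z^s‖ := norm_sub_le _ _
        _ = ‖a s * z^s + a (s+1)*z^(s+1)‖ + q^(s^2) * r^s := by rw [hFz]
    have e2 : q^((s+1)^2) * r^(s+1) = (q^(s^2)*r^s) * (q^(2*s+1) * r) := by ring
    -- (1 - 225/3934 - 9/26) * t ≤ 1  with t = q^(2s+1) r  ⟹ t ≤ 42/25
    by_contra hcon
    push_neg at hcon
    nlinarith [hK, h1, h2, e2, mul_pos hK (lt_trans (by norm_num : (0:ℝ) < 42/25) hcon)]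
  -- contraction
  have hD : (∑' k, (a k * z^k * w^(s+1) - a k * w^k * z^(s+1))) = 0 := by
    rw [Summable.tsum_sub (hsz.mul_right (w^(s+1))) (hsw.mul_right (z^(s+1))), tsum_mul_right,
      tsum_mul_right, hz, hw]
    ring
  have hsD : Summable (fun k => a k * z^k * w^(s+1) - a k * w^k * z^(s+1)) :=
    (hsz.mul_right (w^(s+1))).sub (hsw.mul_right (z^(s+1)))
  have hsplitD := split2 hsD s
  rw [hD] at hsplitD
  have hDs1 : a (s+1) * z^(s+1) * w^(s+1) - a (s+1) * w^(s+1) * z^(s+1) = 0 := by ring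
  have hkey : a s * z^s * w^(s+1) - a s * w^s * z^(s+1)
      = -((∑ k ∈ range s, (a k * z^k * w^(s+1) - a k * w^k * z^(s+1)))
          + ∑' n, (a (n+(s+2)) * z^(n+(s+2)) * w^(s+1) - a (n+(s+2)) * w^(n+(s+2)) * z^(s+1))) := by
    linear_combination -hsplitD - hDs1
  set Δ := ‖z - w‖ with hΔdef
  have hΔ0 : 0 ≤ Δ := norm_nonneg _
  have hQ : ‖a s * z^s * w^(s+1) - a s * w^s * z^(s+1)‖ = q^(s^2) * r^(2*s) * Δ := by
    have e1 : a s * z^s * w^(s+1) - a s * w^s * z^(s+1)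
        = a s * ((z*w)^s * (w - z)) := by
      rw [pow_succ, pow_succ]; ring
    rw [e1, norm_mul, norm_mul, habs, norm_pow, norm_mul, hwz, norm_sub_rev]
    simp only [← hrdef, ← hΔdef]
    ring
  have hDtail : ‖∑' n, (a (n+(s+2)) * z^(n+(s+2)) * w^(s+1) - a (n+(s+2)) * w^(n+(s+2)) * z^(s+1))‖
      ≤ (q^(s^2) * r^(2*s) * Δ * (196/625)) / (1 - 84/2025) := by
    apply norm_tsum_le_geom (by norm_num) (by norm_num)
    intro n
    have e1 : a (n+(s+2)) * z^(n+(s+2)) * w^(s+1) - a (n+(s+2)) * w^(n+(s+2)) * z^(s+1)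
        = a (n+(s+2)) * ((z*w)^(s+1) * (z^(n+1) - w^(n+1))) := by
      rw [show n+(s+2) = (s+1) + (n+1) by ring, pow_add, pow_add, pow_add]
      ring
    rw [e1, norm_mul, norm_mul, habs, norm_pow, norm_mul, hwz]
    have h2 : ‖z^(n+1) - w^(n+1)‖ ≤ ((n:ℝ)+1) * r^n * Δ := by
      have hpp := norm_pow_sub_pow z w hwz n
      calc ‖z^(n+1) - w^(n+1)‖ ≤ ((n:ℝ)+1) * ‖z‖^n * ‖z-w‖ := hpp
        _ = ((n:ℝ)+1) * r^n * Δ := by simp only [← hrdef, ← hΔdef]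
    calc q^((n+(s+2))^2) * ((‖z‖*‖z‖)^(s+1) * ‖z^(n+1) - w^(n+1)‖)
        ≤ q^((n+(s+2))^2) * ((‖z‖*‖z‖)^(s+1) * (((n:ℝ)+1) * r^n * Δ)) := by
          apply mul_le_mul_of_nonneg_left _ (by positivity)
          exact mul_le_mul_of_nonneg_left h2 (by positivity)
      _ = (((n:ℝ)+1) * (q^((n+(s+2))^2) * r^(2*(s+1)+n))) * Δ := by
          simp only [← hrdef, ← hΔdef]; ring
      _ ≤ (q^(s^2) * r^(2*s) * (196/625) * ((84/2025:ℝ))^n) * Δ :=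
          mul_le_mul_of_nonneg_right (termB4 hq0 hq hr0.le hlocB n) hΔ0
      _ = q^(s^2) * r^(2*s) * Δ * (196/625) * ((84/2025:ℝ))^n := by ring
  have hDhead : ‖∑ k ∈ range s, (a k * z^k * w^(s+1) - a k * w^k * z^(s+1))‖
      ≤ (q^(s^2) * r^(2*s) * Δ * (10/63)) / (1 - 10/567) := by
    apply norm_sum_le_geom (by positivity) (by norm_num) (by norm_num)
    intro i hi
    set k := s - 1 - i with hkdef
    have hk : k + (i+1) = s := by omega
    have e1 : a k * z^k * w^(s+1) - a k * w^k * z^(s+1)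
        = a k * ((z*w)^k * (w^(i+2) - z^(i+2))) := by
      rw [show s+1 = k + (i+2) by omega, pow_add, pow_add]
      ring
    rw [e1, norm_mul, norm_mul, habs, norm_pow, norm_mul, hwz]
    have h2 : ‖w^(i+2) - z^(i+2)‖ ≤ ((i:ℝ)+2) * r^(i+1) * Δ := by
      rw [norm_sub_rev]
      have hpp := norm_pow_sub_pow z w hwz (i+1)
      push_cast at hpp
      calc ‖z^(i+2) - w^(i+2)‖ = ‖z^(i+1+1) - w^(i+1+1)‖ := by norm_num
        _ ≤ ((i:ℝ)+1+1) * ‖z‖^(i+1) * ‖z-w‖ := hpp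
        _ = ((i:ℝ)+2) * r^(i+1) * Δ := by simp only [← hrdef, ← hΔdef]; ring
    calc q^(k^2) * ((‖z‖*‖z‖)^k * ‖w^(i+2) - z^(i+2)‖)
        ≤ q^(k^2) * ((‖z‖*‖z‖)^k * (((i:ℝ)+2) * r^(i+1) * Δ)) := by
          apply mul_le_mul_of_nonneg_left _ (by positivity)
          exact mul_le_mul_of_nonneg_left h2 (by positivity)
      _ = (((i:ℝ)+2) * (q^(k^2) * r^(2*k+(i+1)))) * Δ := by
          simp only [← hrdef, ← hΔdef]; ring
      _ ≤ (q^(s^2) * r^(2*s) * (10/63) * ((10/567:ℝ))^i) * Δ :=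
          mul_le_mul_of_nonneg_right (termB5 hq0 hq hr0.le hk hT) hΔ0
      _ = q^(s^2) * r^(2*s) * Δ * (10/63) * ((10/567:ℝ))^i := by ring
  have hfinal : q^(s^2) * r^(2*s) * Δ
      ≤ q^(s^2) * r^(2*s) * Δ * (90/557) + q^(s^2) * r^(2*s) * Δ * (15876/48525) := by
    have e4 : (q^(s^2) * r^(2*s) * Δ * (10/63)) / (1 - 10/567)
        = q^(s^2) * r^(2*s) * Δ * (90/557) := by ring
    have e5 : (q^(s^2) * r^(2*s) * Δ * (196/625)) / (1 - 84/2025)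
        = q^(s^2) * r^(2*s) * Δ * (15876/48525) := by ring
    calc q^(s^2) * r^(2*s) * Δ
        = ‖a s * z^s * w^(s+1) - a s * w^s * z^(s+1)‖ := hQ.symm
      _ ≤ ‖∑ k ∈ range s, (a k * z^k * w^(s+1) - a k * w^k * z^(s+1))‖
          + ‖∑' n, (a (n+(s+2)) * z^(n+(s+2)) * w^(s+1) - a (n+(s+2)) * w^(n+(s+2)) * z^(s+1))‖ := by
          rw [hkey, norm_neg]
          exact norm_add_le _ _
      _ ≤ q^(s^2) * r^(2*s) * Δ * (90/557) + q^(s^2) * r^(2*s) * Δ * (15876/48525) := by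
          rw [← e4, ← e5]
          exact add_le_add hDhead hDtail
  have hP : (0:ℝ) < q^(s^2) * r^(2*s) := by positivity
  have hΔz : Δ = 0 := by nlinarith [hP, hΔ0, hfinal]
  have hzw0 : z - w = 0 := norm_eq_zero.mp hΔz
  exact sub_eq_zero.mp hzw0

end Stmt11Aux

section
open Stmt11Aux Finset Filter Complex

/-- For `f(z) = Σ_k ξ_k e^{-αk²} z^k` with arbitrary signs `ξ_k ∈ {±1}` and `α ≥ log 3`,
all zeros of `f` are real. -/
theorem stmt_11 (α : ℝ) (hα : Real.log 3 ≤ α) (ξ : ℕ → ℝ) (hξ : ∀ k, ξ k = 1 ∨ ξ k = -1)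
    (f : ℂ → ℂ)
    (hf : ∀ z, f z = ∑' k : ℕ, ((ξ k * Real.exp (-(α * k ^ 2)) : ℝ) : ℂ) * z ^ k) :
    ∀ z : ℂ, f z = 0 → z.im = 0 := by
  intro z hz
  classical
  set q := Real.exp (-α) with hqdef
  have hq0 : 0 < q := Real.exp_pos _
  have hq13 : q ≤ 1/3 := by
    have h3 : Real.exp (-α) ≤ Real.exp (-(Real.log 3)) := Real.exp_le_exp.mpr (by linarith)
    have h4 : Real.exp (-(Real.log 3)) = 1/3 := by
      rw [Real.exp_neg, Real.exp_log (by norm_num : (0:ℝ) < 3)]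
      norm_num
    rw [hqdef]
    linarith
  have hq1 : q < 1 := hq13.trans_lt (by norm_num)
  set a : ℕ → ℂ := fun k => ((ξ k * Real.exp (-(α * (k:ℝ) ^ 2)) : ℝ) : ℂ) with hadef
  have habs : ∀ k, ‖a k‖ = q ^ (k^2) := by
    intro k
    have hexp : Real.exp (-(α * (k:ℝ)^2)) = q ^ (k^2) := by
      rw [hqdef, ← Real.exp_nat_mul]
      congr 1
      push_cast
      ring
    have h1 : |ξ k| = 1 := by rcases hξ k with h | h <;> rw [h] <;> norm_num
    have h2 : |Real.exp (-(α * (k:ℝ)^2))| = q^(k^2) := by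
      rw [abs_of_pos (Real.exp_pos _), hexp]
    rw [hadef]
    rw [Complex.norm_real, Real.norm_eq_abs, abs_mul, h1, h2, one_mul]
  have hz0 : (∑' k : ℕ, a k * z ^ k) = 0 := by
    have h := hf z
    rw [hz] at h
    exact h.symm
  set w := (starRingEnd ℂ) z with hwdef
  have hwz : ‖w‖ = ‖z‖ := RCLike.norm_conj z
  have hw0 : (∑' k : ℕ, a k * w ^ k) = 0 := by
    have hhs : HasSum (fun k => a k * z ^ k) 0 :=
      (Summable.hasSum_iff (summable_coef hq0 hq1 a habs z)).mpr hz0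
    have hmap := hhs.map (starRingEnd ℂ) Complex.continuous_conj
    have hmap' : HasSum (fun k => (starRingEnd ℂ) (a k * z ^ k)) 0 := by
      rw [map_zero] at hmap
      exact hmap
    have he : (fun k => (starRingEnd ℂ) (a k * z ^ k)) = fun k => a k * w ^ k := by
      funext k
      rw [map_mul, map_pow, show (starRingEnd ℂ) (a k) = a k from Complex.conj_ofReal _]
    rw [he] at hmap'
    exact hmap'.tsum_eq
  rcases le_or_gt ‖z‖ 1 with hr1 | hr1
  · -- |z| ≤ 1 : no zeros, contradiction
    exfalso
    have hsz := summable_coef hq0 hq1 a habs z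
    have h := Summable.sum_add_tsum_nat_add 1 hsz
    rw [hz0, Finset.sum_range_one] at h
    have he : a 0 * z^0 = -∑' i : ℕ, a (i+1) * z^(i+1) := by linear_combination h
    have h0 : ‖a 0 * z^0‖ = 1 := by rw [norm_mul, habs, norm_pow]; norm_num
    have htail : ‖∑' i : ℕ, a (i+1) * z^(i+1)‖ ≤ ((1:ℝ)/3) / (1 - 1/27) := by
      apply norm_tsum_le_geom (by norm_num) (by norm_num)
      intro n
      rw [norm_mul, habs, norm_pow]
      calc q^((n+1)^2) * ‖z‖^(n+1) ≤ (1/3:ℝ)^(3*n+1) * 1 := by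
            apply mul_le_mul (pow_third hq0.le hq13
              (by nlinarith [Nat.le_self_pow (two_ne_zero) n]))
              (pow_le_one₀ (norm_nonneg z) hr1) (by positivity) (by norm_num)
        _ = (1/3) * ((1/27:ℝ))^n := by
            rw [show (1/27:ℝ) = (1/3)^3 by norm_num]
            simp only [pow_add, ← pow_mul]; ring
    rw [he, norm_neg] at h0
    have : ((1:ℝ)/3) / (1 - 1/27) < 1 := by norm_num
    linarith
  · -- |z| > 1
    have hex : ∃ n : ℕ, q^(n+1) * ‖z‖ ≤ 1 := by
      obtain ⟨N, hN⟩ := exists_pow_lt_of_lt_one (show (0:ℝ) < 1/‖z‖ by positivity) hq1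
      refine ⟨N, ?_⟩
      have h1 : q^N * ‖z‖ < 1 := by
        have h2 := mul_lt_mul_of_pos_right hN (show (0:ℝ) < ‖z‖ by linarith)
        rw [one_div, inv_mul_cancel₀ (show ‖z‖ ≠ 0 by positivity)] at h2
        exact h2
      have hstep : q^(N+1) ≤ q^N := pow_le_pow_of_le_one hq0.le hq1.le (by omega)
      nlinarith [norm_nonneg z]
    set n₀ := Nat.find hex with hn₀
    have hfind : q^(n₀+1) * ‖z‖ ≤ 1 := Nat.find_spec hex
    have hlow : 1 < q^(n₀) * ‖z‖ := by
      rcases Nat.eq_zero_or_pos n₀ with h0 | hpos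
      · rw [h0]; simpa using hr1
      · have hm := Nat.find_min hex (show n₀ - 1 < n₀ by omega)
        push_neg at hm
        have hm' : 1 < q^(n₀-1+1) * ‖z‖ := hm
        rwa [show n₀ - 1 + 1 = n₀ by omega] at hm'
    have hzw : z = w := by
      rcases Nat.even_or_odd n₀ with ⟨m, hm⟩ | ⟨m, hm⟩
      · apply caseA hq0 hq13 a habs hwz m ?_ ?_ hz0 hw0
        · rw [show 2*m = n₀ by omega]; exact hlow.le
        · rw [show 2*m+1 = n₀+1 by omega]; exact hfind.trans (by norm_num)
      · by_cases hc : q^(2*m+1) * ‖z‖ ≤ 7/5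
        · apply caseA hq0 hq13 a habs hwz m ?_ hc hz0 hw0
          have h1 : 1 < q^(2*m+1) * ‖z‖ := by rw [show 2*m+1 = n₀ by omega]; exact hlow
          have h2 : q^(2*m+1) ≤ q^(2*m) := pow_le_pow_of_le_one hq0.le hq1.le (by omega)
          nlinarith [norm_nonneg z]
        · apply caseB hq0 hq13 a habs hwz m (le_of_not_ge hc) ?_ hz0 hw0
          rw [show 2*m+2 = n₀+1 by omega]; exact hfind
    have hcz : (starRingEnd ℂ) z = z := by rw [← hwdef, ← hzw]
    exact Complex.conj_eq_iff_im.mp hcz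

end
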